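/- Let X be a measurable space, P a finite set, ρ_X a probability measure on X, π(·|x) a Markov kernel from X to P, F a separable real Hilbert space, and Φ : X×P → F a bounded measurable feature map with associated kernel k((x,p),(x',p')) = ⟨Φ(x,p), Φ(x',p')⟩_F. Let C = E_{x∼ρ_X, p∼π(·|x)}[Φ(x,p) ⊗ Φ(x,p)], ζ_{x,p} = Φ(x,p)⊗Φ(x,p) − C, and T = E_{x∼ρ_X} E_{p,p'∼π(·|x) independent} Tr(ζ_{x,p} ζ_{x,p'}). Then T = 𝔠₁ − 𝔠₂, where 𝔠₁ = E_{x∼ρ_X} E_{p,p'∼π(·|x)} [k((x,p),(x,p'))²] and 𝔠₂ = E_{x,x'∼ρ_X independent} E_{p∼π(·|x), p'∼π(·|x')} [k((x,p),(x',p'))²]. -/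

import Mathlib

noncomputable section

open MeasureTheory RealInnerProductSpace ContinuousLinearMap

/-- The rank-one operator `u ⊗ v : w ↦ ⟨v, w⟩ • u`. -/
def rankOne {E H : Type*} [NormedAddCommGroup E] [InnerProductSpace ℝ E]
    [NormedAddCommGroup H] [InnerProductSpace ℝ H] (u : H) (v : E) : E →L[ℝ] H :=
  (innerSL ℝ v).smulRight u

/-- The trace of `T : E → E` along a Hilbert basis of `E`. -/
def traceAlong {ι E : Type*} [NormedAddCommGroup E] [InnerProductSpace ℝ E]
    (b : HilbertBasis ι ℝ E) (T : E →L[ℝ] E) : ℝ :=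
  ∑' i, ⟪(b i : E), T (b i)⟫

section aux
variable {F : Type*} [NormedAddCommGroup F] [InnerProductSpace ℝ F]

lemma rankOne_apply' (u v w : F) : rankOne u v w = ⟪v, w⟫ • u := rfl

lemma norm_rankOne_le (u v : F) : ‖rankOne u v‖ ≤ ‖v‖ * ‖u‖ := by
  rw [rankOne, ContinuousLinearMap.norm_smulRight_apply, innerSL_apply_norm]

lemma continuous_rankOne : Continuous (fun uv : F × F => rankOne uv.1 uv.2) := by
  have : (fun uv : F × F => rankOne uv.1 uv.2)
      = fun uv : F × F => (ContinuousLinearMap.smulRightL ℝ F F (innerSL ℝ uv.2)) uv.1 := rfl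
  rw [this]
  exact (((ContinuousLinearMap.smulRightL ℝ F F).continuous.comp
    ((innerSL ℝ).continuous.comp continuous_snd)).clm_apply continuous_fst)

lemma sep_of_basis {ι : Type*} [Countable ι] (b : HilbertBasis ι ℝ F) :
    TopologicalSpace.SeparableSpace F := by
  classical
  rw [← TopologicalSpace.isSeparable_univ_iff]
  have h := b.dense_span
  have h2 : (Set.univ : Set F)
      = closure (Submodule.span ℝ (Set.range fun i => b.repr.symm (lp.single 2 i 1)) : Set F) := by
    simp only [HilbertBasis.repr_symm_single]
    rw [← Submodule.topologicalClosure_coe, h, Submodule.top_coe]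
  rw [h2]
  exact ((Set.countable_range _).isSeparable.span).closure

lemma abs_mul_abs_le (a c : ℝ) : |a| * |c| ≤ (a ^ 2 + c ^ 2) / 2 := by
  nlinarith [sq_nonneg (|a| - |c|), sq_abs a, sq_abs c]

end aux

lemma integrable_of_bdd {α : Type*} [MeasurableSpace α] {μ : Measure α} [IsFiniteMeasure μ]
    {f : α → ℝ} (hf : AEStronglyMeasurable f μ) {c : ℝ} (hc : ∀ a, |f a| ≤ c) :
    Integrable f μ :=
  (integrable_const c).mono' hf (ae_of_all _ (by simpa [Real.norm_eq_abs] using hc))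

/-- **Characterisation of the covariance trace term.**
With `C = E[Φ(x,p)⊗Φ(x,p)]`, `ζ_{x,p} = Φ(x,p)⊗Φ(x,p) - C` and kernel
`k((x,p),(x',p')) = ⟨Φ(x,p), Φ(x',p')⟩`, the quantity
`T = E_x E_{p,p'|x} Tr(ζ_{x,p} ζ_{x,p'})` equals `𝔠₁ - 𝔠₂`, where
`𝔠₁ = E_x E_{p,p'|x} k((x,p),(x,p'))²` and
`𝔠₂ = E_{x,x'} E_{p|x, p'|x'} k((x,p),(x',p'))²`. -/
theorem stmt_7 {X P F : Type*} [MeasurableSpace X] [Fintype P]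
    [NormedAddCommGroup F] [InnerProductSpace ℝ F] [CompleteSpace F]
    [MeasurableSpace F] [BorelSpace F]
    {ι : Type*} [Countable ι] (b : HilbertBasis ι ℝ F)
    (ρX : Measure X) [IsProbabilityMeasure ρX]
    (π : X → P → ℝ) (hπ0 : ∀ x p, 0 ≤ π x p) (hπ1 : ∀ x, ∑ p, π x p = 1)
    (hπm : ∀ p, Measurable fun x => π x p)
    (Φ : X → P → F) (hΦm : ∀ p, Measurable fun x => Φ x p)
    (hΦb : ∃ M, ∀ x p, ‖Φ x p‖ ≤ M)
    (C : F →L[ℝ] F)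
    (hC : C = ∫ x, (∑ p, π x p • rankOne (Φ x p) (Φ x p)) ∂ρX)
    (T : ℝ)
    (hT : T = ∫ x, ∑ p, ∑ p', π x p * π x p' *
        traceAlong b ((rankOne (Φ x p) (Φ x p) - C)
          ∘L (rankOne (Φ x p') (Φ x p') - C)) ∂ρX)
    (c₁ : ℝ)
    (hc₁ : c₁ = ∫ x, ∑ p, ∑ p', π x p * π x p' * ⟪Φ x p, Φ x p'⟫ ^ 2 ∂ρX)
    (c₂ : ℝ)
    (hc₂ : c₂ = ∫ x, ∫ x', ∑ p, ∑ p', π x p * π x' p' * ⟪Φ x p, Φ x' p'⟫ ^ 2 ∂ρX ∂ρX) :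
    T = c₁ - c₂ := by
  classical
  haveI : TopologicalSpace.SeparableSpace F := sep_of_basis b
  haveI : SecondCountableTopology F := UniformSpace.secondCountable_of_separable F
  obtain ⟨M, hM⟩ := hΦb
  have hXne : Nonempty X := by
    by_contra h
    have h1 := measure_univ (μ := ρX)
    rw [Set.univ_eq_empty_iff.mpr (not_nonempty_iff.mp h), measure_empty] at h1
    exact zero_ne_one h1
  have hPne : Nonempty P := by
    by_contra h
    haveI : IsEmpty P := not_nonempty_iff.mp h
    have h1 := hπ1 (Classical.arbitrary X)
    rw [Finset.univ_eq_empty (α := P), Finset.sum_empty] at h1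
    exact zero_ne_one h1
  have hM0 : 0 ≤ M :=
    le_trans (norm_nonneg _) (hM (Classical.arbitrary X) (Classical.arbitrary P))
  have hb1 : ∀ i, ‖(b i : F)‖ = 1 := fun i => b.orthonormal.1 i
  have hbin : ∀ (i) (w : F), |⟪(b i : F), w⟫| ≤ ‖w‖ := by
    intro i w
    calc |⟪(b i : F), w⟫| ≤ ‖(b i : F)‖ * ‖w‖ := abs_real_inner_le_norm _ _
    _ = ‖w‖ := by rw [hb1, one_mul]
  set S : X → F →L[ℝ] F := fun x => ∑ p, π x p • rankOne (Φ x p) (Φ x p) with hSdef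
  -- measurability and integrability of S
  have hΦsm : ∀ p, StronglyMeasurable fun x => Φ x p := fun p => (hΦm p).stronglyMeasurable
  have hSsm : StronglyMeasurable S := by
    apply Finset.stronglyMeasurable_fun_sum
    intro p _
    exact (hπm p).stronglyMeasurable.smul
      (continuous_rankOne.comp_stronglyMeasurable ((hΦsm p).prodMk (hΦsm p)))
  have hSnorm : ∀ x, ‖S x‖ ≤ M ^ 2 := by
    intro x
    calc ‖S x‖ ≤ ∑ p, ‖π x p • rankOne (Φ x p) (Φ x p)‖ := norm_sum_le _ _
    _ ≤ ∑ p, π x p * M ^ 2 := by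
        refine Finset.sum_le_sum fun p _ => ?_
        refine le_trans (norm_smul_le (π x p) (rankOne (Φ x p) (Φ x p))) ?_
        rw [Real.norm_eq_abs, abs_of_nonneg (hπ0 x p)]
        refine mul_le_mul_of_nonneg_left ?_ (hπ0 x p)
        calc ‖rankOne (Φ x p) (Φ x p)‖ ≤ ‖Φ x p‖ * ‖Φ x p‖ := norm_rankOne_le _ _
        _ ≤ M * M := mul_le_mul (hM x p) (hM x p) (norm_nonneg _) hM0
        _ = M ^ 2 := (sq M).symm
    _ = M ^ 2 := by rw [← Finset.sum_mul, hπ1, one_mul]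
  have hSint : Integrable S ρX := by
    refine (integrable_const (M ^ 2)).mono' hSsm.aestronglyMeasurable (ae_of_all _ ?_)
    simpa using hSnorm
  have hCapp : ∀ u, C u = ∫ x, S x u ∂ρX := by
    intro u
    rw [hC]
    exact ContinuousLinearMap.integral_apply hSint u
  have hSusm : ∀ u : F, StronglyMeasurable fun x => S x u := by
    intro u
    exact (ContinuousLinearMap.apply ℝ F u).continuous.comp_stronglyMeasurable hSsm
  have hSuint : ∀ u : F, Integrable (fun x => S x u) ρX := by
    intro u
    refine (integrable_const (M ^ 2 * ‖u‖)).mono' (hSusm u).aestronglyMeasurable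
      (ae_of_all _ fun x => ?_)
    calc ‖S x u‖ ≤ ‖S x‖ * ‖u‖ := (S x).le_opNorm u
    _ ≤ M ^ 2 * ‖u‖ := mul_le_mul_of_nonneg_right (hSnorm x) (norm_nonneg _)
  have hinnerC : ∀ v u : F, ⟪v, C u⟫ = ∫ x, ⟪v, S x u⟫ ∂ρX := by
    intro v u
    rw [hCapp u]
    exact (integral_inner (hSuint u) v).symm
  have hSinner : ∀ (x) (u v : F), ⟪v, S x u⟫ = ∑ p, π x p * (⟪Φ x p, u⟫ * ⟪v, Φ x p⟫) := by
    intro x u v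
    simp only [hSdef, ContinuousLinearMap.sum_apply, ContinuousLinearMap.smul_apply,
      rankOne_apply', inner_sum, real_inner_smul_right]
  have hπle1 : ∀ x p, π x p ≤ 1 := by
    intro x p
    rw [← hπ1 x]
    exact Finset.single_le_sum (fun p _ => hπ0 x p) (Finset.mem_univ p)
  -- trace has-sums
  have htrAB : ∀ u v : F, HasSum (fun i => ⟪(b i : F), ((rankOne u u) ∘L (rankOne v v)) (b i)⟫)
      (⟪u, v⟫ ^ 2) := by
    intro u v
    have h2 : (fun i => ⟪(b i : F), ((rankOne u u) ∘L (rankOne v v)) (b i)⟫)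
        = fun i => ⟪u, v⟫ * (⟪v, (b i : F)⟫ * ⟪(b i : F), u⟫) := by
      funext i
      simp only [ContinuousLinearMap.comp_apply, rankOne_apply', real_inner_smul_right,
        inner_smul_right, real_inner_smul_left]
      try ring
    rw [h2, show ⟪u, v⟫ ^ 2 = ⟪u, v⟫ * ⟪v, u⟫ by rw [real_inner_comm v u]; ring]
    exact (b.hasSum_inner_mul_inner v u).mul_left _
  have htrAC : ∀ u : F, HasSum (fun i => ⟪(b i : F), ((rankOne u u) ∘L C) (b i)⟫) ⟪u, C u⟫ := by
    intro u
    have h2 : (fun i => ⟪(b i : F), ((rankOne u u) ∘L C) (b i)⟫)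
        = fun i => ⟪adjoint C u, (b i : F)⟫ * ⟪(b i : F), u⟫ := by
      funext i
      simp only [ContinuousLinearMap.comp_apply, rankOne_apply', real_inner_smul_right]
      rw [adjoint_inner_left]
      try ring
    rw [h2, show ⟪u, C u⟫ = ⟪adjoint C u, u⟫ from (adjoint_inner_left C u u).symm]
    exact b.hasSum_inner_mul_inner _ _
  have htrCB : ∀ v : F, HasSum (fun i => ⟪(b i : F), (C ∘L (rankOne v v)) (b i)⟫) ⟪v, C v⟫ := by
    intro v
    have h2 : (fun i => ⟪(b i : F), (C ∘L (rankOne v v)) (b i)⟫)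
        = fun i => ⟪v, (b i : F)⟫ * ⟪(b i : F), C v⟫ := by
      funext i
      simp only [ContinuousLinearMap.comp_apply, rankOne_apply',
        ContinuousLinearMap.map_smul, real_inner_smul_right, smul_eq_mul]
      try ring
    rw [h2]
    exact b.hasSum_inner_mul_inner _ _
  have hquad : ∀ u : F, ⟪u, C u⟫ = ∫ x, ∑ p, π x p * ⟪u, Φ x p⟫ ^ 2 ∂ρX := by
    intro u
    rw [hinnerC u u]
    refine integral_congr_ae (ae_of_all _ fun x => ?_)
    show ⟪u, S x u⟫ = ∑ p, π x p * ⟪u, Φ x p⟫ ^ 2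
    rw [hSinner x u u]
    refine Finset.sum_congr rfl fun p _ => ?_
    rw [real_inner_comm (Φ x p) u]
    ring
  -- the function family for the C∘C trace term
  set hfun : ι → X × X → ℝ := fun i z => ∑ p, ∑ p', π z.1 p * π z.2 p' *
      (⟪(b i : F), Φ z.1 p⟫ * ⟪Φ z.2 p', (b i : F)⟫ * ⟪Φ z.1 p, Φ z.2 p'⟫) with hfundef
  set k2 : X × X → ℝ := fun z => ∑ p, ∑ p', π z.1 p * π z.2 p' * ⟪Φ z.1 p, Φ z.2 p'⟫ ^ 2
    with hk2def
  have hsum1 : ∀ (x x' : X) (c : ℝ), ∑ p, ∑ p', π x p * π x' p' * c = c := by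
    intro x x' c
    have h1 : ∀ p, ∑ p', π x p * π x' p' * c = π x p * c := by
      intro p
      calc ∑ p', π x p * π x' p' * c = ∑ p', (π x p * c) * π x' p' :=
        Finset.sum_congr rfl fun p' _ => by ring
      _ = π x p * c := by rw [← Finset.mul_sum, hπ1, mul_one]
    rw [Finset.sum_congr rfl fun p _ => h1 p, ← Finset.sum_mul, hπ1, one_mul]
  have hfm : ∀ i, StronglyMeasurable (hfun i) := by
    intro i
    apply Finset.stronglyMeasurable_fun_sum
    intro p _
    apply Finset.stronglyMeasurable_fun_sum
    intro p' _
    apply Measurable.stronglyMeasurable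
    exact (((hπm p).comp measurable_fst).mul ((hπm p').comp measurable_snd)).mul
      (((measurable_const.inner ((hΦm p).comp measurable_fst)).mul
        (((hΦm p').comp measurable_snd).inner measurable_const)).mul
        (((hΦm p).comp measurable_fst).inner ((hΦm p').comp measurable_snd)))
  have htermbd : ∀ (i) (x x' : X) (p p'),
      |π x p * π x' p' * (⟪(b i : F), Φ x p⟫ * ⟪Φ x' p', (b i : F)⟫ * ⟪Φ x p, Φ x' p'⟫)|
        ≤ π x p * π x' p' * M ^ 4 := by
    intro i x x' p p'
    rw [abs_mul, abs_mul (π x p), abs_of_nonneg (hπ0 x p), abs_of_nonneg (hπ0 x' p')]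
    refine mul_le_mul_of_nonneg_left ?_ (mul_nonneg (hπ0 x p) (hπ0 x' p'))
    rw [abs_mul, abs_mul]
    have h1 : |⟪(b i : F), Φ x p⟫| ≤ M := (hbin i _).trans (hM x p)
    have h2 : |⟪Φ x' p', (b i : F)⟫| ≤ M := by
      rw [real_inner_comm]; exact (hbin i _).trans (hM x' p')
    have h3 : |⟪Φ x p, Φ x' p'⟫| ≤ M ^ 2 := by
      refine (abs_real_inner_le_norm _ _).trans ?_
      rw [sq]
      exact mul_le_mul (hM x p) (hM x' p') (norm_nonneg _) hM0
    calc |⟪(b i : F), Φ x p⟫| * |⟪Φ x' p', (b i : F)⟫| * |⟪Φ x p, Φ x' p'⟫|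
        ≤ (M * M) * M ^ 2 := by
          refine mul_le_mul (mul_le_mul h1 h2 (abs_nonneg _) hM0) h3 (abs_nonneg _) ?_
          positivity
    _ = M ^ 4 := by ring
  have hfbd : ∀ i z, |hfun i z| ≤ M ^ 4 := by
    intro i z
    calc |hfun i z| ≤ ∑ p, |∑ p', π z.1 p * π z.2 p' *
        (⟪(b i : F), Φ z.1 p⟫ * ⟪Φ z.2 p', (b i : F)⟫ * ⟪Φ z.1 p, Φ z.2 p'⟫)| :=
      Finset.abs_sum_le_sum_abs _ _
    _ ≤ ∑ p, ∑ p', |π z.1 p * π z.2 p' *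
        (⟪(b i : F), Φ z.1 p⟫ * ⟪Φ z.2 p', (b i : F)⟫ * ⟪Φ z.1 p, Φ z.2 p'⟫)| :=
      Finset.sum_le_sum fun p _ => Finset.abs_sum_le_sum_abs _ _
    _ ≤ ∑ p, ∑ p', π z.1 p * π z.2 p' * M ^ 4 :=
      Finset.sum_le_sum fun p _ => Finset.sum_le_sum fun p' _ => htermbd i z.1 z.2 p p'
    _ = M ^ 4 := hsum1 z.1 z.2 _
  have hfint : ∀ i, Integrable (hfun i) (ρX.prod ρX) := fun i =>
    integrable_of_bdd (hfm i).aestronglyMeasurable (hfbd i)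
  have hgint : ∀ (i : ι) (x : X) (p : P), Integrable (fun x' => ∑ p', π x p * π x' p' *
      (⟪(b i : F), Φ x p⟫ * ⟪Φ x' p', (b i : F)⟫ * ⟪Φ x p, Φ x' p'⟫)) ρX := by
    intro i x p
    refine integrable_of_bdd (Measurable.aestronglyMeasurable ?_) (c := M ^ 4) ?_
    · apply Finset.measurable_sum
      intro p' _
      exact (measurable_const.mul (hπm p')).mul
        ((measurable_const.mul ((hΦm p').inner measurable_const)).mul
          (measurable_const.inner (hΦm p')))
    · intro x'
      calc |∑ p', π x p * π x' p' *
          (⟪(b i : F), Φ x p⟫ * ⟪Φ x' p', (b i : F)⟫ * ⟪Φ x p, Φ x' p'⟫)|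
          ≤ ∑ p', |π x p * π x' p' *
          (⟪(b i : F), Φ x p⟫ * ⟪Φ x' p', (b i : F)⟫ * ⟪Φ x p, Φ x' p'⟫)| :=
        Finset.abs_sum_le_sum_abs _ _
      _ ≤ ∑ p', π x' p' * M ^ 4 := by
          refine Finset.sum_le_sum fun p' _ => (htermbd i x x' p p').trans ?_
          have : π x p * π x' p' ≤ 1 * π x' p' :=
            mul_le_mul_of_nonneg_right (hπle1 x p) (hπ0 x' p')
          rw [one_mul] at this
          exact mul_le_mul_of_nonneg_right this (by positivity)
      _ = M ^ 4 := by rw [← Finset.sum_mul, hπ1, one_mul]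
  have hCCi : ∀ i, ⟪(b i : F), C (C (b i))⟫ = ∫ z, hfun i z ∂(ρX.prod ρX) := by
    intro i
    rw [hinnerC, integral_prod _ (hfint i)]
    refine integral_congr_ae (ae_of_all _ fun x => ?_)
    show ⟪(b i : F), S x (C (b i))⟫ = ∫ x', hfun i (x, x') ∂ρX
    rw [hSinner x (C (b i)) (b i)]
    have key : ∀ p : P, π x p * (⟪Φ x p, C (b i)⟫ * ⟪(b i : F), Φ x p⟫)
        = ∫ x', ∑ p', π x p * π x' p' *
          (⟪(b i : F), Φ x p⟫ * ⟪Φ x' p', (b i : F)⟫ * ⟪Φ x p, Φ x' p'⟫) ∂ρX := by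
      intro p
      rw [hinnerC (Φ x p) (b i), ← integral_mul_const, ← integral_const_mul]
      refine integral_congr_ae (ae_of_all _ fun x' => ?_)
      show π x p * (⟪Φ x p, S x' (b i)⟫ * ⟪(b i : F), Φ x p⟫) = _
      rw [hSinner x' (b i) (Φ x p), Finset.sum_mul, Finset.mul_sum]
      exact Finset.sum_congr rfl fun p' _ => by ring
    rw [Finset.sum_congr rfl fun p _ => key p]
    rw [← integral_finset_sum Finset.univ fun p _ => hgint i x p]
  -- pointwise sum over the basis
  have hptsum : ∀ z : X × X, HasSum (fun i => hfun i z) (k2 z) := by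
    intro z
    apply hasSum_sum
    intro p _
    apply hasSum_sum
    intro p' _
    have h2 : (fun i => π z.1 p * π z.2 p' *
        (⟪(b i : F), Φ z.1 p⟫ * ⟪Φ z.2 p', (b i : F)⟫ * ⟪Φ z.1 p, Φ z.2 p'⟫))
        = fun i => (π z.1 p * π z.2 p' * ⟪Φ z.1 p, Φ z.2 p'⟫) *
          (⟪Φ z.2 p', (b i : F)⟫ * ⟪(b i : F), Φ z.1 p⟫) := funext fun i => by ring
    rw [h2, show π z.1 p * π z.2 p' * ⟪Φ z.1 p, Φ z.2 p'⟫ ^ 2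
        = (π z.1 p * π z.2 p' * ⟪Φ z.1 p, Φ z.2 p'⟫) * ⟪Φ z.2 p', Φ z.1 p⟫ by
      rw [real_inner_comm (Φ z.2 p') (Φ z.1 p)]; ring]
    exact (b.hasSum_inner_mul_inner _ _).mul_left _
  have hsq : ∀ u : F, HasSum (fun i => ⟪(b i : F), u⟫ ^ 2) (‖u‖ ^ 2) := by
    intro u
    have h := b.hasSum_inner_mul_inner u u
    have h2 : (fun i => ⟪u, (b i : F)⟫ * ⟪(b i : F), u⟫) = fun i => ⟪(b i : F), u⟫ ^ 2 :=
      funext fun i => by rw [real_inner_comm u (b i)]; ring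
    rw [h2, real_inner_self_eq_norm_sq] at h
    exact h
  -- dominating family
  set bnd : ι → X × X → ℝ := fun i z => ∑ p, ∑ p', π z.1 p * π z.2 p' *
      (M ^ 2 * ((⟪(b i : F), Φ z.1 p⟫ ^ 2 + ⟪(b i : F), Φ z.2 p'⟫ ^ 2) / 2)) with hbnddef
  have hbnd0 : ∀ i z, 0 ≤ bnd i z := by
    intro i z
    refine Finset.sum_nonneg fun p _ => Finset.sum_nonneg fun p' _ => ?_
    have := hπ0 z.1 p; have := hπ0 z.2 p'
    positivity
  have habs : ∀ (i) (z : X × X), ‖hfun i z‖ ≤ bnd i z := by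
    intro i z
    rw [Real.norm_eq_abs]
    calc |hfun i z| ≤ ∑ p, ∑ p', |π z.1 p * π z.2 p' *
        (⟪(b i : F), Φ z.1 p⟫ * ⟪Φ z.2 p', (b i : F)⟫ * ⟪Φ z.1 p, Φ z.2 p'⟫)| := by
          refine le_trans (Finset.abs_sum_le_sum_abs _ _) ?_
          exact Finset.sum_le_sum fun p hp => Finset.abs_sum_le_sum_abs _ _
    _ ≤ bnd i z := by
      refine Finset.sum_le_sum fun p _ => Finset.sum_le_sum fun p' _ => ?_
      rw [abs_mul, abs_mul (π z.1 p), abs_of_nonneg (hπ0 z.1 p), abs_of_nonneg (hπ0 z.2 p')]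
      refine mul_le_mul_of_nonneg_left ?_ (mul_nonneg (hπ0 z.1 p) (hπ0 z.2 p'))
      rw [abs_mul, abs_mul]
      have h3 : |⟪Φ z.1 p, Φ z.2 p'⟫| ≤ M ^ 2 := by
        refine (abs_real_inner_le_norm _ _).trans ?_
        rw [sq]
        exact mul_le_mul (hM z.1 p) (hM z.2 p') (norm_nonneg _) hM0
      have h4 : |⟪(b i : F), Φ z.1 p⟫| * |⟪Φ z.2 p', (b i : F)⟫|
          ≤ (⟪(b i : F), Φ z.1 p⟫ ^ 2 + ⟪(b i : F), Φ z.2 p'⟫ ^ 2) / 2 := by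
        rw [real_inner_comm (Φ z.2 p') (b i : F)]
        exact abs_mul_abs_le _ _
      calc |⟪(b i : F), Φ z.1 p⟫| * |⟪Φ z.2 p', (b i : F)⟫| * |⟪Φ z.1 p, Φ z.2 p'⟫|
          ≤ ((⟪(b i : F), Φ z.1 p⟫ ^ 2 + ⟪(b i : F), Φ z.2 p'⟫ ^ 2) / 2) * M ^ 2 := by
            refine mul_le_mul h4 h3 (abs_nonneg _) ?_
            positivity
      _ = M ^ 2 * ((⟪(b i : F), Φ z.1 p⟫ ^ 2 + ⟪(b i : F), Φ z.2 p'⟫ ^ 2) / 2) := by ring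
  have hbm : ∀ i, StronglyMeasurable (bnd i) := by
    intro i
    apply Finset.stronglyMeasurable_fun_sum
    intro p _
    apply Finset.stronglyMeasurable_fun_sum
    intro p' _
    apply Measurable.stronglyMeasurable
    exact (((hπm p).comp measurable_fst).mul ((hπm p').comp measurable_snd)).mul
      (measurable_const.mul ((((measurable_const.inner ((hΦm p).comp measurable_fst)).pow
        measurable_const).add ((measurable_const.inner
          ((hΦm p').comp measurable_snd)).pow measurable_const)).div measurable_const))
  have hbint : ∀ i, Integrable (bnd i) (ρX.prod ρX) := by
    intro i
    refine integrable_of_bdd (hbm i).aestronglyMeasurable (c := M ^ 4) fun z => ?_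
    rw [abs_of_nonneg (hbnd0 i z)]
    calc bnd i z ≤ ∑ p, ∑ p', π z.1 p * π z.2 p' * M ^ 4 := by
          refine Finset.sum_le_sum fun p _ => Finset.sum_le_sum fun p' _ => ?_
          refine mul_le_mul_of_nonneg_left ?_ (mul_nonneg (hπ0 z.1 p) (hπ0 z.2 p'))
          have ha : ⟪(b i : F), Φ z.1 p⟫ ^ 2 ≤ M ^ 2 := by
            rw [← sq_abs]
            refine pow_le_pow_left₀ (abs_nonneg _) ((hbin i _).trans (hM z.1 p)) 2
          have hb : ⟪(b i : F), Φ z.2 p'⟫ ^ 2 ≤ M ^ 2 := by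
            rw [← sq_abs]
            refine pow_le_pow_left₀ (abs_nonneg _) ((hbin i _).trans (hM z.2 p')) 2
          calc M ^ 2 * ((⟪(b i : F), Φ z.1 p⟫ ^ 2 + ⟪(b i : F), Φ z.2 p'⟫ ^ 2) / 2)
              ≤ M ^ 2 * ((M ^ 2 + M ^ 2) / 2) := by
                refine mul_le_mul_of_nonneg_left ?_ (by positivity)
                linarith
          _ = M ^ 4 := by ring
    _ = M ^ 4 := hsum1 z.1 z.2 _
  -- partial sums of the dominating integrals are bounded
  have hpartial : ∀ s : Finset ι, ∑ i ∈ s, ∫ z, bnd i z ∂(ρX.prod ρX) ≤ M ^ 4 := by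
    intro s
    rw [← integral_finset_sum s fun i _ => hbint i]
    have hpt : ∀ z : X × X, ∑ i ∈ s, bnd i z ≤ M ^ 4 := by
      intro z
      rw [Finset.sum_comm]
      have hinner2 : ∀ p, ∑ i ∈ s, ∑ p', π z.1 p * π z.2 p' *
          (M ^ 2 * ((⟪(b i : F), Φ z.1 p⟫ ^ 2 + ⟪(b i : F), Φ z.2 p'⟫ ^ 2) / 2))
          = ∑ p', ∑ i ∈ s, π z.1 p * π z.2 p' *
          (M ^ 2 * ((⟪(b i : F), Φ z.1 p⟫ ^ 2 + ⟪(b i : F), Φ z.2 p'⟫ ^ 2) / 2)) :=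
        fun p => Finset.sum_comm
      rw [Finset.sum_congr rfl fun p _ => hinner2 p]
      calc ∑ p, ∑ p', ∑ i ∈ s, π z.1 p * π z.2 p' *
          (M ^ 2 * ((⟪(b i : F), Φ z.1 p⟫ ^ 2 + ⟪(b i : F), Φ z.2 p'⟫ ^ 2) / 2))
          ≤ ∑ p, ∑ p', π z.1 p * π z.2 p' * M ^ 4 := by
            refine Finset.sum_le_sum fun p _ => Finset.sum_le_sum fun p' _ => ?_
            have hsa : ∑ i ∈ s, ⟪(b i : F), Φ z.1 p⟫ ^ 2 ≤ M ^ 2 := by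
              refine (sum_le_hasSum s (fun i _ => sq_nonneg _) (hsq (Φ z.1 p))).trans ?_
              rw [← sq_abs ‖Φ z.1 p‖, abs_of_nonneg (norm_nonneg _)]
              exact pow_le_pow_left₀ (norm_nonneg _) (hM z.1 p) 2
            have hsb : ∑ i ∈ s, ⟪(b i : F), Φ z.2 p'⟫ ^ 2 ≤ M ^ 2 := by
              refine (sum_le_hasSum s (fun i _ => sq_nonneg _) (hsq (Φ z.2 p'))).trans ?_
              rw [← sq_abs ‖Φ z.2 p'‖, abs_of_nonneg (norm_nonneg _)]
              exact pow_le_pow_left₀ (norm_nonneg _) (hM z.2 p') 2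
            have hexp : ∑ i ∈ s, π z.1 p * π z.2 p' *
                (M ^ 2 * ((⟪(b i : F), Φ z.1 p⟫ ^ 2 + ⟪(b i : F), Φ z.2 p'⟫ ^ 2) / 2))
                = π z.1 p * π z.2 p' * (M ^ 2 *
                  ((∑ i ∈ s, ⟪(b i : F), Φ z.1 p⟫ ^ 2
                    + ∑ i ∈ s, ⟪(b i : F), Φ z.2 p'⟫ ^ 2) / 2)) := by
              rw [← Finset.mul_sum, ← Finset.mul_sum, ← Finset.sum_div, Finset.sum_add_distrib]
            rw [hexp]
            refine mul_le_mul_of_nonneg_left ?_ (mul_nonneg (hπ0 z.1 p) (hπ0 z.2 p'))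
            calc M ^ 2 * ((∑ i ∈ s, ⟪(b i : F), Φ z.1 p⟫ ^ 2
                + ∑ i ∈ s, ⟪(b i : F), Φ z.2 p'⟫ ^ 2) / 2)
                ≤ M ^ 2 * ((M ^ 2 + M ^ 2) / 2) := by
                  refine mul_le_mul_of_nonneg_left ?_ (by positivity)
                  linarith
            _ = M ^ 4 := by ring
      _ = M ^ 4 := hsum1 z.1 z.2 _
    calc ∫ z, ∑ i ∈ s, bnd i z ∂(ρX.prod ρX) ≤ ∫ _z, M ^ 4 ∂(ρX.prod ρX) :=
      integral_mono (integrable_finset_sum s fun i _ => hbint i) (integrable_const _) hpt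
    _ = M ^ 4 := by simp
  have hsummable_norm : Summable (fun i => ∫ z, ‖hfun i z‖ ∂(ρX.prod ρX)) := by
    refine Summable.of_nonneg_of_le (fun i => integral_nonneg fun z => norm_nonneg _)
      (fun i => integral_mono (hfint i).norm (hbint i) (habs i)) ?_
    exact summable_of_sum_le (fun i => integral_nonneg fun z => hbnd0 i z) hpartial
  have hCCsum : HasSum (fun i => ⟪(b i : F), C (C (b i))⟫)
      (∫ z, k2 z ∂(ρX.prod ρX)) := by
    have h := hasSum_integral_of_summable_integral_norm hfint hsummable_norm
    have h2 : (∫ z, ∑' i, hfun i z ∂(ρX.prod ρX)) = ∫ z, k2 z ∂(ρX.prod ρX) :=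
      integral_congr_ae (ae_of_all _ fun z => (hptsum z).tsum_eq)
    rw [h2] at h
    have h3 : (fun i => ⟪(b i : F), C (C (b i))⟫) = fun i => ∫ z, hfun i z ∂(ρX.prod ρX) :=
      funext hCCi
    rw [h3]
    exact h
  -- identification of the C∘C trace with c₂
  have hk2m : StronglyMeasurable k2 := by
    apply Finset.stronglyMeasurable_fun_sum
    intro p _
    apply Finset.stronglyMeasurable_fun_sum
    intro p' _
    apply Measurable.stronglyMeasurable
    exact (((hπm p).comp measurable_fst).mul ((hπm p').comp measurable_snd)).mul
      ((((hΦm p).comp measurable_fst).inner ((hΦm p').comp measurable_snd)).pow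
        measurable_const)
  have hk2bd : ∀ z : X × X, |k2 z| ≤ M ^ 4 := by
    intro z
    calc |k2 z| ≤ ∑ p, ∑ p', |π z.1 p * π z.2 p' * ⟪Φ z.1 p, Φ z.2 p'⟫ ^ 2| := by
          refine le_trans (Finset.abs_sum_le_sum_abs _ _) ?_
          exact Finset.sum_le_sum fun p hp => Finset.abs_sum_le_sum_abs _ _
    _ ≤ ∑ p, ∑ p', π z.1 p * π z.2 p' * M ^ 4 := by
          refine Finset.sum_le_sum fun p _ => Finset.sum_le_sum fun p' _ => ?_
          rw [abs_mul, abs_mul (π z.1 p), abs_of_nonneg (hπ0 z.1 p),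
            abs_of_nonneg (hπ0 z.2 p')]
          refine mul_le_mul_of_nonneg_left ?_ (mul_nonneg (hπ0 z.1 p) (hπ0 z.2 p'))
          rw [abs_pow]
          have h3 : |⟪Φ z.1 p, Φ z.2 p'⟫| ≤ M ^ 2 := by
            refine (abs_real_inner_le_norm _ _).trans ?_
            rw [sq]
            exact mul_le_mul (hM z.1 p) (hM z.2 p') (norm_nonneg _) hM0
          calc |⟪Φ z.1 p, Φ z.2 p'⟫| ^ 2 ≤ (M ^ 2) ^ 2 :=
            pow_le_pow_left₀ (abs_nonneg _) h3 2
          _ = M ^ 4 := by ring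
    _ = M ^ 4 := hsum1 z.1 z.2 _
  have hk2int : Integrable k2 (ρX.prod ρX) :=
    integrable_of_bdd hk2m.aestronglyMeasurable hk2bd
  have hτ : (∫ z, k2 z ∂(ρX.prod ρX)) = c₂ := by
    rw [hc₂, integral_prod k2 hk2int]
  -- the trace formula
  have htrace : ∀ u v : F, traceAlong b ((rankOne u u - C) ∘L (rankOne v v - C))
      = ⟪u, v⟫ ^ 2 - ⟪u, C u⟫ - ⟪v, C v⟫ + ∫ z, k2 z ∂(ρX.prod ρX) := by
    intro u v
    have hexp : (rankOne u u - C) ∘L (rankOne v v - C)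
        = (((rankOne u u ∘L rankOne v v) - (rankOne u u ∘L C)) - (C ∘L rankOne v v))
          + (C ∘L C) := by
      rw [sub_comp, comp_sub, comp_sub]
      abel
    have hsum := (((htrAB u v).sub (htrAC u)).sub (htrCB v)).add hCCsum
    have h0 : traceAlong b ((rankOne u u - C) ∘L (rankOne v v - C))
        = ∑' i, ⟪(b i : F), ((rankOne u u - C) ∘L (rankOne v v - C)) (b i)⟫ := rfl
    rw [h0, hexp]
    have hfe : (fun i => ⟪(b i : F), ((((rankOne u u ∘L rankOne v v) - (rankOne u u ∘L C))
          - (C ∘L rankOne v v)) + (C ∘L C)) (b i)⟫)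
        = fun i => ⟪(b i : F), ((rankOne u u) ∘L (rankOne v v)) (b i)⟫
            - ⟪(b i : F), ((rankOne u u) ∘L C) (b i)⟫
            - ⟪(b i : F), (C ∘L (rankOne v v)) (b i)⟫
            + ⟪(b i : F), C (C (b i))⟫ := by
      funext i
      simp only [ContinuousLinearMap.add_apply, ContinuousLinearMap.sub_apply,
        inner_add_right, inner_sub_right, ContinuousLinearMap.comp_apply]
    rw [hfe]
    exact hsum.tsum_eq
  -- q and its integral
  set q : X → ℝ := fun x => ∑ p, π x p * ⟪Φ x p, C (Φ x p)⟫ with hqdef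
  have hgbd : ∀ (x : X) (p : P), |⟪Φ x p, C (Φ x p)⟫| ≤ M ^ 2 * ‖C‖ := by
    intro x p
    calc |⟪Φ x p, C (Φ x p)⟫| ≤ ‖Φ x p‖ * ‖C (Φ x p)‖ := abs_real_inner_le_norm _ _
    _ ≤ M * (‖C‖ * M) := by
        refine mul_le_mul (hM x p) ?_ (norm_nonneg _) hM0
        exact (C.le_opNorm _).trans (mul_le_mul_of_nonneg_left (hM x p) (norm_nonneg C))
    _ = M ^ 2 * ‖C‖ := by ring
  have hqm : StronglyMeasurable q := by
    apply Finset.stronglyMeasurable_fun_sum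
    intro p _
    apply Measurable.stronglyMeasurable
    exact (hπm p).mul ((hΦm p).inner (C.continuous.measurable.comp (hΦm p)))
  have hqint : Integrable q ρX := by
    refine integrable_of_bdd hqm.aestronglyMeasurable (c := M ^ 2 * ‖C‖) fun x => ?_
    calc |q x| ≤ ∑ p, |π x p * ⟪Φ x p, C (Φ x p)⟫| := Finset.abs_sum_le_sum_abs _ _
    _ ≤ ∑ p, π x p * (M ^ 2 * ‖C‖) := by
        refine Finset.sum_le_sum fun p _ => ?_
        rw [abs_mul, abs_of_nonneg (hπ0 x p)]
        exact mul_le_mul_of_nonneg_left (hgbd x p) (hπ0 x p)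
    _ = M ^ 2 * ‖C‖ := by rw [← Finset.sum_mul, hπ1, one_mul]
  have hint2 : ∀ (x : X) (p : P),
      Integrable (fun x' => π x p * ∑ p', π x' p' * ⟪Φ x p, Φ x' p'⟫ ^ 2) ρX := by
    intro x p
    refine integrable_of_bdd (Measurable.aestronglyMeasurable ?_) (c := M ^ 4) fun x' => ?_
    · refine measurable_const.mul ?_
      apply Finset.measurable_sum
      intro p' _
      exact (hπm p').mul ((measurable_const.inner (hΦm p')).pow measurable_const)
    · rw [abs_mul, abs_of_nonneg (hπ0 x p)]
      calc π x p * |∑ p', π x' p' * ⟪Φ x p, Φ x' p'⟫ ^ 2|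
          ≤ 1 * |∑ p', π x' p' * ⟪Φ x p, Φ x' p'⟫ ^ 2| :=
        mul_le_mul_of_nonneg_right (hπle1 x p) (abs_nonneg _)
      _ ≤ ∑ p', π x' p' * M ^ 4 := by
          rw [one_mul]
          refine le_trans (Finset.abs_sum_le_sum_abs _ _) ?_
          refine Finset.sum_le_sum fun p' _ => ?_
          rw [abs_mul, abs_of_nonneg (hπ0 x' p'), abs_pow]
          refine mul_le_mul_of_nonneg_left ?_ (hπ0 x' p')
          have h3 : |⟪Φ x p, Φ x' p'⟫| ≤ M ^ 2 := by
            refine (abs_real_inner_le_norm _ _).trans ?_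
            rw [sq]
            exact mul_le_mul (hM x p) (hM x' p') (norm_nonneg _) hM0
          calc |⟪Φ x p, Φ x' p'⟫| ^ 2 ≤ (M ^ 2) ^ 2 := pow_le_pow_left₀ (abs_nonneg _) h3 2
          _ = M ^ 4 := by ring
      _ = M ^ 4 := by rw [← Finset.sum_mul, hπ1, one_mul]
  have hqx : ∀ x, q x = ∫ x', k2 (x, x') ∂ρX := by
    intro x
    have h1 : ∀ p : P, π x p * ⟪Φ x p, C (Φ x p)⟫
        = ∫ x', π x p * ∑ p', π x' p' * ⟪Φ x p, Φ x' p'⟫ ^ 2 ∂ρX := by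
      intro p
      rw [hquad (Φ x p), ← integral_const_mul]
    calc q x = ∑ p, ∫ x', π x p * ∑ p', π x' p' * ⟪Φ x p, Φ x' p'⟫ ^ 2 ∂ρX :=
      Finset.sum_congr rfl fun p _ => h1 p
    _ = ∫ x', ∑ p, π x p * ∑ p', π x' p' * ⟪Φ x p, Φ x' p'⟫ ^ 2 ∂ρX :=
      (integral_finset_sum Finset.univ fun p _ => hint2 x p).symm
    _ = ∫ x', k2 (x, x') ∂ρX := by
        refine integral_congr_ae (ae_of_all _ fun x' => ?_)
        show _ = ∑ p, ∑ p', π x p * π x' p' * ⟪Φ x p, Φ x' p'⟫ ^ 2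
        refine Finset.sum_congr rfl fun p _ => ?_
        rw [Finset.mul_sum]
        exact Finset.sum_congr rfl fun p' _ => by ring
  have hIq : ∫ x, q x ∂ρX = c₂ := by
    rw [hc₂]
    exact integral_congr_ae (ae_of_all _ fun x => hqx x)
  -- pointwise identity for the T-integrand
  set τ : ℝ := ∫ z, k2 z ∂(ρX.prod ρX) with hτdef
  have e1 : ∀ (x : X) (f : P → ℝ), ∑ p, ∑ p', π x p * π x p' * f p = ∑ p, π x p * f p := by
    intro x f
    refine Finset.sum_congr rfl fun p _ => ?_
    calc ∑ p', π x p * π x p' * f p = ∑ p', (π x p * f p) * π x p' :=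
      Finset.sum_congr rfl fun p' _ => by ring
    _ = π x p * f p := by rw [← Finset.mul_sum, hπ1, mul_one]
  have e2 : ∀ (x : X) (f : P → ℝ), ∑ p, ∑ p', π x p * π x p' * f p' = ∑ p, π x p * f p := by
    intro x f
    rw [Finset.sum_comm]
    refine Finset.sum_congr rfl fun p' _ => ?_
    calc ∑ p, π x p * π x p' * f p' = ∑ p, (π x p' * f p') * π x p :=
      Finset.sum_congr rfl fun p _ => by ring
    _ = π x p' * f p' := by rw [← Finset.mul_sum, hπ1, mul_one]
  have hintegrand : ∀ x, (∑ p, ∑ p', π x p * π x p' *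
      traceAlong b ((rankOne (Φ x p) (Φ x p) - C) ∘L (rankOne (Φ x p') (Φ x p') - C)))
      = (∑ p, ∑ p', π x p * π x p' * ⟪Φ x p, Φ x p'⟫ ^ 2) - 2 * q x + τ := by
    intro x
    have hstep : ∀ p p' : P, π x p * π x p' *
        traceAlong b ((rankOne (Φ x p) (Φ x p) - C) ∘L (rankOne (Φ x p') (Φ x p') - C))
        = π x p * π x p' * ⟪Φ x p, Φ x p'⟫ ^ 2
          - π x p * π x p' * ⟪Φ x p, C (Φ x p)⟫
          - π x p * π x p' * ⟪Φ x p', C (Φ x p')⟫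
          + π x p * π x p' * τ := by
      intro p p'
      rw [htrace (Φ x p) (Φ x p')]
      ring
    rw [Finset.sum_congr rfl fun p _ => Finset.sum_congr rfl fun p' _ => hstep p p']
    simp only [Finset.sum_add_distrib, Finset.sum_sub_distrib]
    rw [e1 x (fun p => ⟪Φ x p, C (Φ x p)⟫), e2 x (fun p => ⟪Φ x p, C (Φ x p)⟫),
      hsum1 x x τ]
    rw [hqdef]
    ring
  -- final computation
  have hkxxint : Integrable (fun x => ∑ p, ∑ p', π x p * π x p' * ⟪Φ x p, Φ x p'⟫ ^ 2) ρX := by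
    refine integrable_of_bdd (Measurable.aestronglyMeasurable ?_) (c := M ^ 4) fun x => ?_
    · apply Finset.measurable_sum
      intro p _
      apply Finset.measurable_sum
      intro p' _
      exact ((hπm p).mul (hπm p')).mul (((hΦm p).inner (hΦm p')).pow measurable_const)
    · exact hk2bd (x, x)
  rw [hT]
  have hTi : (∫ x, ∑ p, ∑ p', π x p * π x p' *
      traceAlong b ((rankOne (Φ x p) (Φ x p) - C) ∘L (rankOne (Φ x p') (Φ x p') - C)) ∂ρX)
      = ∫ x, ((∑ p, ∑ p', π x p * π x p' * ⟪Φ x p, Φ x p'⟫ ^ 2) - 2 * q x + τ) ∂ρX :=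
    integral_congr_ae (ae_of_all _ fun x => hintegrand x)
  have hg2 : Integrable (fun x => 2 * q x) ρX := hqint.const_mul 2
  have hsub : Integrable (fun x =>
      (∑ p, ∑ p', π x p * π x p' * ⟪Φ x p, Φ x p'⟫ ^ 2) - 2 * q x) ρX := hkxxint.sub hg2
  rw [hTi, integral_add hsub (integrable_const τ),
    integral_sub hkxxint hg2, integral_const_mul, integral_const]
  simp only [measure_univ, probReal_univ, ENNReal.toReal_one, smul_eq_mul, one_mul]
  rw [hIq, ← hc₁, hτ]
  ring
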